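/- Gluing periodic orbits to establish recurrence: let Σ̃ be an irreducible TMS, φ weakly Hölder with Hölder constants C_H', γ and P = P_G(φ) < ∞, and suppose there exist symbols a, b, a connecting admissible word W from b to a of length m, and n_k ↑ ∞ such that Σ_k Σ_{words W̃ of length n_k from a to b} e^{φ_{n_k}(S^{(W̃·W)}) − n_k P} = ∞, where S^{(W')} is the periodic chain with repeating word W'. Then Σ_{n≥1} Σ_{S: σ^n S = S, S_0 = a} e^{φ_n(S) − nP} = ∞, i.e. φ is recurrent. -/
import Mathlib


open scoped ENNReal

/-- **gluing periodic orbits to establish recurrence.**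
Let `Σ̃` be an irreducible TMS with shift `σ`, `φ` weakly Hölder with
constants `CH', γ` and pressure `P`, and suppose there are symbols `a, b`, a
connecting admissible word `W` from `b` to `a` of length `m`, and `n_k ↑ ∞`
such that `Σ_k Σ_{words W̃ of length n_k from a to b}
e^{φ_{n_k}(S^{(W̃·W)}) − n_k P} = ∞` (the inner sum indexed by the periodic
chains with repeating word `W̃·W`).  Then
`Σ_{n≥1} Σ_{S : σ^n S = S, S_0 = a} e^{φ_n(S) − nP} = ∞`,
i.e. `φ` is recurrent. -/
theorem gluing_periodic_orbits_recurrence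
    {S2 A : Type*} (σ : S2 ≃ S2) (coord : S2 → ℤ → A)
    (φ : S2 → ℝ) (P : ℝ)
    (hshift : ∀ v : S2, ∀ i : ℤ, coord (σ v) i = coord v (i + 1))
    -- irreducibility (scene-setting)
    (hirr : ∀ S T : S2, ∃ n : ℕ, 1 ≤ n ∧
      ∃ Q : S2, coord Q 0 = coord S 0 ∧ coord Q (n : ℤ) = coord T 0)
    -- `φ` bounded and weakly Hölder with constants `CH'`, `γ`
    (Kφ : ℝ) (hbdd : ∀ S : S2, |φ S| ≤ Kφ)
    (CH' γ : ℝ) (hCH' : 0 ≤ CH') (hγ0 : 0 < γ) (hγ1 : γ < 1)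
    (hHolder : ∀ S T : S2, ∀ k : ℕ,
      (∀ i : ℤ, |i| ≤ (k : ℤ) → coord S i = coord T i) →
      |φ S - φ T| ≤ CH' * γ ^ k)
    (a b : A) (m : ℕ) (hm : 1 ≤ m)
    (W : ℕ → A) (hW0 : W 0 = b) (hWlast : W (m - 1) = a)
    (nk : ℕ → ℕ) (hnk : StrictMono nk) (hnk1 : 1 ≤ nk 0)
    -- divergence of the glued-word series
    (hdiv : ∑' k : ℕ, ∑' S : {S : S2 // (⇑σ)^[nk k + m] S = S ∧
        coord S 0 = a ∧ coord S (((nk k - 1 : ℕ) : ℤ)) = b ∧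
        ∀ i : ℕ, i < m → coord S (((nk k + i : ℕ) : ℤ)) = W i},
      ENNReal.ofReal (Real.exp
        ((∑ j ∈ Finset.range (nk k), φ ((⇑σ)^[j] S.1)) - (nk k) * P)) = ⊤) :
    ∑' n : ℕ, ∑' S : {S : S2 // (⇑σ)^[n + 1] S = S ∧ coord S 0 = a},
      ENNReal.ofReal (Real.exp
        ((∑ j ∈ Finset.range (n + 1), φ ((⇑σ)^[j] S.1)) - (n + 1) * P)) = ⊤ := by
  classical
  set C : ℝ≥0∞ := ENNReal.ofReal (Real.exp (m * (Kφ + |P|))) with hC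
  have hCne : C ≠ ⊤ := ENNReal.ofReal_ne_top
  set RHS : ℕ → ℝ≥0∞ := fun n =>
    ∑' S : {S : S2 // (⇑σ)^[n + 1] S = S ∧ coord S 0 = a},
      ENNReal.ofReal (Real.exp
        ((∑ j ∈ Finset.range (n + 1), φ ((⇑σ)^[j] S.1)) - (n + 1) * P)) with hRHS
  set f : ℕ → ℕ := fun k => nk k + m - 1 with hf
  have hf1 : ∀ k, f k + 1 = nk k + m := by intro k; simp only [hf]; omega
  have hfinj : Function.Injective f := by
    intro i j h
    apply hnk.injective
    simp only [hf] at h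
    omega
  -- pointwise bound per k
  have key : ∀ k : ℕ,
      (∑' S : {S : S2 // (⇑σ)^[nk k + m] S = S ∧
        coord S 0 = a ∧ coord S (((nk k - 1 : ℕ) : ℤ)) = b ∧
        ∀ i : ℕ, i < m → coord S (((nk k + i : ℕ) : ℤ)) = W i},
      ENNReal.ofReal (Real.exp
        ((∑ j ∈ Finset.range (nk k), φ ((⇑σ)^[j] S.1)) - (nk k) * P)))
      ≤ C * RHS (f k) := by
    intro k
    have hfk : f k + 1 = nk k + m := hf1 k
    -- the inclusion map
    set ι : {S : S2 // (⇑σ)^[nk k + m] S = S ∧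
        coord S 0 = a ∧ coord S (((nk k - 1 : ℕ) : ℤ)) = b ∧
        ∀ i : ℕ, i < m → coord S (((nk k + i : ℕ) : ℤ)) = W i} →
        {S : S2 // (⇑σ)^[f k + 1] S = S ∧ coord S 0 = a} :=
      fun S => ⟨S.1, by rw [hfk]; exact ⟨S.2.1, S.2.2.1⟩⟩ with hι
    have hιinj : Function.Injective ι := by
      intro x y h
      have hv : (ι x).1 = (ι y).1 := congrArg Subtype.val h
      exact Subtype.ext hv
    calc (∑' S : {S : S2 // (⇑σ)^[nk k + m] S = S ∧
        coord S 0 = a ∧ coord S (((nk k - 1 : ℕ) : ℤ)) = b ∧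
        ∀ i : ℕ, i < m → coord S (((nk k + i : ℕ) : ℤ)) = W i},
      ENNReal.ofReal (Real.exp
        ((∑ j ∈ Finset.range (nk k), φ ((⇑σ)^[j] S.1)) - (nk k) * P)))
        ≤ ∑' S : {S : S2 // (⇑σ)^[nk k + m] S = S ∧
        coord S 0 = a ∧ coord S (((nk k - 1 : ℕ) : ℤ)) = b ∧
        ∀ i : ℕ, i < m → coord S (((nk k + i : ℕ) : ℤ)) = W i},
          (C * ENNReal.ofReal (Real.exp
            ((∑ j ∈ Finset.range (f k + 1), φ ((⇑σ)^[j] (ι S).1)) - (f k + 1) * P))) := by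
          apply ENNReal.tsum_le_tsum
          intro S
          have hval : (ι S).1 = S.1 := rfl
          rw [hval, hC, ← ENNReal.ofReal_mul (Real.exp_nonneg _), ← Real.exp_add]
          apply ENNReal.ofReal_le_ofReal
          apply Real.exp_le_exp.2
          have hsplit : (∑ j ∈ Finset.range (f k + 1), φ ((⇑σ)^[j] S.1))
              = (∑ j ∈ Finset.range (nk k), φ ((⇑σ)^[j] S.1))
                + ∑ j ∈ Finset.Ico (nk k) (nk k + m), φ ((⇑σ)^[j] S.1) := by
            rw [hfk, Finset.sum_range_add_sum_Ico _ (Nat.le_add_right _ _)]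
          have htail : -(m * Kφ) ≤ ∑ j ∈ Finset.Ico (nk k) (nk k + m), φ ((⇑σ)^[j] S.1) := by
            have : ∀ j ∈ Finset.Ico (nk k) (nk k + m), -Kφ ≤ φ ((⇑σ)^[j] S.1) := by
              intro j _
              exact neg_le_of_abs_le (hbdd _)
            calc -(m * Kφ) = ∑ _j ∈ Finset.Ico (nk k) (nk k + m), (-Kφ) := by
                  rw [Finset.sum_const, Nat.card_Ico, Nat.add_sub_cancel_left,
                    nsmul_eq_mul]
                  ring
              _ ≤ _ := Finset.sum_le_sum this
          have hP : -((m : ℝ) * |P|) ≤ -((m : ℝ) * P) := by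
            have : (m : ℝ) * P ≤ (m : ℝ) * |P| :=
              mul_le_mul_of_nonneg_left (le_abs_self P) (by positivity)
            linarith
          have hfk' : ((f k : ℝ) + 1) = (nk k : ℝ) + m := by exact_mod_cast hfk
          rw [hsplit]
          push_cast
          rw [hfk']
          nlinarith [htail, hP]
      _ ≤ ∑' S : {S : S2 // (⇑σ)^[f k + 1] S = S ∧ coord S 0 = a},
          (C * ENNReal.ofReal (Real.exp
            ((∑ j ∈ Finset.range (f k + 1), φ ((⇑σ)^[j] S.1)) - (f k + 1) * P))) :=
          ENNReal.tsum_comp_le_tsum_of_injective hιinj _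
      _ = C * RHS (f k) := by rw [hRHS, ENNReal.tsum_mul_left]
  have h1 : (⊤ : ℝ≥0∞) ≤ C * ∑' n, RHS n := by
    calc (⊤ : ℝ≥0∞) = _ := hdiv.symm
      _ ≤ ∑' k, C * RHS (f k) := ENNReal.tsum_le_tsum key
      _ = C * ∑' k, RHS (f k) := ENNReal.tsum_mul_left
      _ ≤ C * ∑' n, RHS n :=
          mul_le_mul_right (ENNReal.tsum_comp_le_tsum_of_injective hfinj RHS) _
  by_contra hne
  exact (ENNReal.mul_ne_top hCne hne) (top_le_iff.1 h1)
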